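/- For softened probabilities p = SF(f; τ) of a fixed logit vector f ∈ ℝ^C, the variance v(p) = (1/C)Σ_c (p_c − 1/C)² is monotonically non-increasing as a function of τ ∈ (0, ∞). -/

import Mathlib

open Real Finset

private lemma cheb {C : ℕ} (N g : Fin C → ℝ) (hN : ∀ c, 0 ≤ N c)
    (hmono : ∀ c d, 0 ≤ (N c - N d) * (g c - g d)) :
    (∑ c, N c ^ 2) * (∑ c, N c * g c) ≤ (∑ c, N c ^ 2 * g c) * (∑ c, N c) := by
  have key : 0 ≤ ∑ c, ∑ d, N c * N d * ((N c - N d) * (g c - g d)) :=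
    Finset.sum_nonneg fun c _ => Finset.sum_nonneg fun d _ =>
      mul_nonneg (mul_nonneg (hN c) (hN d)) (hmono c d)
  have hsplit : (∑ c, ∑ d, N c * N d * ((N c - N d) * (g c - g d)))
      = (∑ c, ∑ d, (N c ^ 2 * g c * N d - N c ^ 2 * (N d * g d)))
        + ∑ c, ∑ d, (N d ^ 2 * g d * N c - N d ^ 2 * (N c * g c)) := by
    rw [← Finset.sum_add_distrib]
    refine Finset.sum_congr rfl fun c _ => ?_
    rw [← Finset.sum_add_distrib]
    exact Finset.sum_congr rfl fun d _ => by ring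
  have hcomm : (∑ c, ∑ d, (N d ^ 2 * g d * N c - N d ^ 2 * (N c * g c)))
      = ∑ c, ∑ d, (N c ^ 2 * g c * N d - N c ^ 2 * (N d * g d)) := Finset.sum_comm
  have hval : (∑ c, ∑ d, (N c ^ 2 * g c * N d - N c ^ 2 * (N d * g d)))
      = (∑ c, N c ^ 2 * g c) * (∑ c, N c) - (∑ c, N c ^ 2) * (∑ c, N c * g c) := by
    rw [Finset.sum_mul_sum, Finset.sum_mul_sum, ← Finset.sum_sub_distrib]
    refine Finset.sum_congr rfl fun c _ => ?_
    rw [← Finset.sum_sub_distrib]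
  rw [hsplit, hcomm, hval] at key
  linarith

/-- The variance of the softened probabilities is non-increasing in temperature. -/
theorem softmax_variance_antitone (C : ℕ) (hC : 1 ≤ C) (f : Fin C → ℝ)
    (p : ℝ → Fin C → ℝ)
    (hp : ∀ t i, p t i = Real.exp (f i / t) / ∑ j, Real.exp (f j / t)) :
    AntitoneOn (fun t => (1 / (C : ℝ)) * ∑ c, (p t c - 1 / (C : ℝ)) ^ 2)
      (Set.Ioi (0 : ℝ)) := by
  have hne : Nonempty (Fin C) := ⟨⟨0, hC⟩⟩
  set V : ℝ → ℝ := fun t =>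
    (1 / (C : ℝ)) * ∑ c, (Real.exp (f c / t) / (∑ j, Real.exp (f j / t)) - 1 / (C : ℝ)) ^ 2
    with hV
  -- derivative data at each positive t
  have hder : ∀ t ∈ Set.Ioi (0 : ℝ), HasDerivAt V
      ((1 / (C : ℝ)) * ∑ c, (2 : ℕ) *
        (Real.exp (f c / t) / (∑ j, Real.exp (f j / t)) - 1 / (C : ℝ)) ^ 1 *
        ((Real.exp (f c / t) * (f c * -((t : ℝ) ^ 2)⁻¹) * (∑ j, Real.exp (f j / t)) -
          Real.exp (f c / t) * (∑ j, Real.exp (f j / t) * (f j * -((t : ℝ) ^ 2)⁻¹))) /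
          (∑ j, Real.exp (f j / t)) ^ 2)) t := by
    intro t ht
    have ht' : (0 : ℝ) < t := ht
    have hZpos : 0 < ∑ j, Real.exp (f j / t) :=
      Finset.sum_pos (fun j _ => Real.exp_pos _) Finset.univ_nonempty
    have hN : ∀ j : Fin C, HasDerivAt (fun s : ℝ => Real.exp (f j / s))
        (Real.exp (f j / t) * (f j * -((t : ℝ) ^ 2)⁻¹)) t := by
      intro j
      have h1 : HasDerivAt (fun s : ℝ => f j * s⁻¹) (f j * -((t : ℝ) ^ 2)⁻¹) t :=
        (hasDerivAt_inv (ne_of_gt ht')).const_mul (f j)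
      have h2 := h1.exp
      simpa only [div_eq_mul_inv] using h2
    have hZ : HasDerivAt (fun s : ℝ => ∑ j, Real.exp (f j / s))
        (∑ j, Real.exp (f j / t) * (f j * -((t : ℝ) ^ 2)⁻¹)) t :=
      HasDerivAt.fun_sum (fun j _ => hN j)
    have hq : ∀ c : Fin C, HasDerivAt
        (fun s : ℝ => Real.exp (f c / s) / ∑ j, Real.exp (f j / s))
        ((Real.exp (f c / t) * (f c * -((t : ℝ) ^ 2)⁻¹) * (∑ j, Real.exp (f j / t)) -
          Real.exp (f c / t) * (∑ j, Real.exp (f j / t) * (f j * -((t : ℝ) ^ 2)⁻¹))) /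
          (∑ j, Real.exp (f j / t)) ^ 2) t :=
      fun c => (hN c).div hZ (ne_of_gt hZpos)
    have hsum : HasDerivAt (fun s : ℝ =>
        ∑ c, (Real.exp (f c / s) / (∑ j, Real.exp (f j / s)) - 1 / (C : ℝ)) ^ 2)
        (∑ c, (2 : ℕ) *
          (Real.exp (f c / t) / (∑ j, Real.exp (f j / t)) - 1 / (C : ℝ)) ^ 1 *
          ((Real.exp (f c / t) * (f c * -((t : ℝ) ^ 2)⁻¹) * (∑ j, Real.exp (f j / t)) -
            Real.exp (f c / t) * (∑ j, Real.exp (f j / t) * (f j * -((t : ℝ) ^ 2)⁻¹))) /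
            (∑ j, Real.exp (f j / t)) ^ 2)) t :=
      HasDerivAt.fun_sum (fun c _ => (((hq c).sub_const (1 / (C : ℝ))).pow 2))
    exact hsum.const_mul _
  -- the derivative is nonpositive
  have hnonpos : ∀ t ∈ Set.Ioi (0 : ℝ),
      ((1 / (C : ℝ)) * ∑ c, (2 : ℕ) *
        (Real.exp (f c / t) / (∑ j, Real.exp (f j / t)) - 1 / (C : ℝ)) ^ 1 *
        ((Real.exp (f c / t) * (f c * -((t : ℝ) ^ 2)⁻¹) * (∑ j, Real.exp (f j / t)) -
          Real.exp (f c / t) * (∑ j, Real.exp (f j / t) * (f j * -((t : ℝ) ^ 2)⁻¹))) /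
          (∑ j, Real.exp (f j / t)) ^ 2)) ≤ 0 := by
    intro t ht
    have ht' : (0 : ℝ) < t := ht
    have hZpos : 0 < ∑ j, Real.exp (f j / t) :=
      Finset.sum_pos (fun j _ => Real.exp_pos _) Finset.univ_nonempty
    set A : ℝ := ∑ j, Real.exp (f j / t) with hA
    set B : ℝ := ∑ j, Real.exp (f j / t) * f j with hB
    set u : ℝ := ((t : ℝ) ^ 2)⁻¹ with hu
    have hupos : 0 < u := by positivity
    have hB' : (∑ j, Real.exp (f j / t) * (f j * -u)) = -u * B := by
      rw [hB, Finset.mul_sum]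
      exact Finset.sum_congr rfl fun j _ => by ring
    -- sum of D_c is zero
    have hDzero : (∑ c, (Real.exp (f c / t) * (f c * -u) * A -
        Real.exp (f c / t) * (∑ j, Real.exp (f j / t) * (f j * -u))) / A ^ 2) = 0 := by
      rw [← Finset.sum_div, Finset.sum_sub_distrib, ← Finset.sum_mul, ← Finset.sum_mul, hB',
        ← hA]
      rw [mul_comm]
      simp
    -- the main inequality
    have hch := cheb (fun c => Real.exp (f c / t)) f (fun c => (Real.exp_pos _).le)
      (by
        intro c d
        rcases le_total (f c) (f d) with h | h
        · have h1 : Real.exp (f c / t) ≤ Real.exp (f d / t) :=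
            Real.exp_le_exp.mpr (div_le_div_of_nonneg_right h ht'.le)
          nlinarith
        · have h1 : Real.exp (f d / t) ≤ Real.exp (f c / t) :=
            Real.exp_le_exp.mpr (div_le_div_of_nonneg_right h ht'.le)
          nlinarith)
    have hmain : (∑ c, (Real.exp (f c / t) / A) *
        ((Real.exp (f c / t) * (f c * -u) * A -
          Real.exp (f c / t) * (∑ j, Real.exp (f j / t) * (f j * -u))) / A ^ 2)) ≤ 0 := by
      have hterm : ∀ c : Fin C, (Real.exp (f c / t) / A) *
          ((Real.exp (f c / t) * (f c * -u) * A -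
            Real.exp (f c / t) * (∑ j, Real.exp (f j / t) * (f j * -u))) / A ^ 2)
          = (u / A ^ 3) * (Real.exp (f c / t) ^ 2 * B - Real.exp (f c / t) ^ 2 * f c * A) := by
        intro c
        rw [hB']
        field_simp
        ring
      rw [Finset.sum_congr rfl fun c _ => hterm c, ← Finset.mul_sum,
        Finset.sum_sub_distrib, ← Finset.sum_mul, ← Finset.sum_mul]
      have h1 : (∑ c, Real.exp (f c / t) ^ 2) * B - (∑ c, Real.exp (f c / t) ^ 2 * f c) * A ≤ 0 := by
        have := hch
        simp only [hA, hB] at *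
        linarith
      have h2 : 0 ≤ u / A ^ 3 := by positivity
      exact mul_nonpos_of_nonneg_of_nonpos h2 h1
    -- combine
    have hCnn : (0 : ℝ) ≤ 1 / (C : ℝ) := by positivity
    have hsum : (∑ c, (2 : ℕ) * (Real.exp (f c / t) / A - 1 / (C : ℝ)) ^ 1 *
        ((Real.exp (f c / t) * (f c * -u) * A -
          Real.exp (f c / t) * (∑ j, Real.exp (f j / t) * (f j * -u))) / A ^ 2)) ≤ 0 := by
      have hre : ∀ c : Fin C, (2 : ℕ) * (Real.exp (f c / t) / A - 1 / (C : ℝ)) ^ 1 *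
          ((Real.exp (f c / t) * (f c * -u) * A -
            Real.exp (f c / t) * (∑ j, Real.exp (f j / t) * (f j * -u))) / A ^ 2)
          = 2 * ((Real.exp (f c / t) / A) *
            ((Real.exp (f c / t) * (f c * -u) * A -
              Real.exp (f c / t) * (∑ j, Real.exp (f j / t) * (f j * -u))) / A ^ 2))
            - 2 * (1 / (C : ℝ)) *
            ((Real.exp (f c / t) * (f c * -u) * A -
              Real.exp (f c / t) * (∑ j, Real.exp (f j / t) * (f j * -u))) / A ^ 2) := by
        intro c; push_cast; ring
      rw [Finset.sum_congr rfl fun c _ => hre c, Finset.sum_sub_distrib, ← Finset.mul_sum,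
        ← Finset.mul_sum, hDzero]
      simp only [mul_zero, sub_zero]
      linarith
    exact mul_nonpos_of_nonneg_of_nonpos hCnn hsum
  have hanti : AntitoneOn V (Set.Ioi (0 : ℝ)) := by
    have hdiff : DifferentiableOn ℝ V (Set.Ioi (0 : ℝ)) :=
      fun t ht => ((hder t ht).differentiableAt).differentiableWithinAt
    refine antitoneOn_of_deriv_nonpos (convex_Ioi 0) hdiff.continuousOn ?_ ?_
    · rw [interior_Ioi]; exact hdiff
    · rw [interior_Ioi]
      intro t ht
      rw [(hder t ht).deriv]
      exact hnonpos t ht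
  intro a ha b hb hab
  have := hanti ha hb hab
  simpa only [hV, hp] using this
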